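/- Given a plant with closed behavior L ⊆ Σ* and a specification K ⊆ Σ*, the family C(K) of controllable sublanguages of K is closed under arbitrary unions; consequently C(K) contains a unique supremal element sup C(K) = ⋃{K' | K' ∈ C(K)}, which is itself a controllable sublanguage of K. -/
import Mathlib


/-- Prefix closure of a language over alphabet `A`. -/
def cl {A : Type*} (L : Set (List A)) : Set (List A) := {s | ∃ t, s ++ t ∈ L}

/-- Controllability of K' w.r.t. plant behavior L and uncontrollable events Su. -/
def Controllable {A : Type*} (Su : Set A) (L K' : Set (List A)) : Prop :=
  ∀ s ∈ cl K', ∀ σ ∈ Su, s ++ [σ] ∈ L → s ++ [σ] ∈ cl K'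

/-- The family of controllable sublanguages of K. -/
def CFam {A : Type*} (Su : Set A) (L K : Set (List A)) : Set (Set (List A)) :=
  {K' | K' ⊆ K ∧ Controllable Su L K'}

theorem supC_exists {A : Type*} [Fintype A] (Sc Su : Set A) (hpart : Sc ∪ Su = Set.univ)
    (L : Set (List A)) (hclosed : cl L = L) (K : Set (List A)) :
    (∀ F ⊆ CFam Su L K, ⋃₀ F ∈ CFam Su L K) ∧
    (⋃₀ CFam Su L K) ∈ CFam Su L K ∧
    (∀ K' ∈ CFam Su L K, K' ⊆ ⋃₀ CFam Su L K) := by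
  have main : ∀ F ⊆ CFam Su L K, ⋃₀ F ∈ CFam Su L K := by
    intro F hF
    constructor
    · intro s hs
      obtain ⟨K', hK', hsK'⟩ := hs
      exact (hF hK').1 hsK'
    · intro s hs σ hσ hL
      obtain ⟨t, K', hK', hst⟩ := hs
      have : s ++ [σ] ∈ cl K' := (hF hK').2 s ⟨t, hst⟩ σ hσ hL
      obtain ⟨u, hu⟩ := this
      exact ⟨u, K', hK', hu⟩
  refine ⟨main, main _ (subset_refl _), fun K' hK' => Set.subset_sUnion_of_mem hK'⟩
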